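/- Let Y be a finite nonempty type, let π_base be a full-support probability vector on Y, let r : Y → ℝ, and let β > 0. Then the supremum over all probability vectors π on Y of ∑_y π(y)·r(y) − β·KL(π‖π_base) equals β·log(∑_y π_base(y)·exp(r(y)/β)), and this supremum is attained. -/
import Mathlib


open Finset Real

/-- Kullback–Leibler divergence between finitely supported probability vectors.
Terms with `p y = 0` vanish since `0 * log _ = 0`. -/
noncomputable def KL {Y : Type*} [Fintype Y] (p q : Y → ℝ) : ℝ :=
  ∑ y, p y * Real.log (p y / q y)

/-- Gibbs' inequality: KL divergence is nonnegative. -/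
lemma sum_log_div_nonneg {Y : Type*} [Fintype Y] (ρ q : Y → ℝ)
    (hρ : ∀ y, 0 ≤ ρ y) (hρs : ∑ y, ρ y = 1)
    (hq : ∀ y, 0 < q y) (hqs : ∑ y, q y = 1) :
    0 ≤ ∑ y, ρ y * Real.log (ρ y / q y) := by
  have h : ∀ y ∈ Finset.univ, ρ y - q y ≤ ρ y * Real.log (ρ y / q y) := by
    intro y _
    rcases eq_or_lt_of_le (hρ y) with h0 | h0
    · simp only [← h0, zero_mul, zero_sub]
      linarith [(hq y).le]
    · have hx : 0 < q y / ρ y := div_pos (hq y) h0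
      have hlog := Real.log_le_sub_one_of_pos hx
      have hrw : Real.log (ρ y / q y) = - Real.log (q y / ρ y) := by
        rw [← Real.log_inv, inv_div]
      have hc : ρ y * (q y / ρ y) = q y := mul_div_cancel₀ _ h0.ne'
      rw [hrw]
      nlinarith
  have hs := Finset.sum_le_sum h
  rw [Finset.sum_sub_distrib, hρs, hqs] at hs
  linarith

/-- The supremum of the KL-regularized objective over probability vectors equals
`β * log (∑ y, π_base y * exp (r y / β))`, and it is attained. -/
theorem sup_is_log_partition
    {Y : Type*} [Fintype Y] [Nonempty Y]
    (πb : Y → ℝ) (hπb_pos : ∀ y, 0 < πb y) (hπb_sum : ∑ y, πb y = 1)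
    (r : Y → ℝ) (β : ℝ) (hβ : 0 < β) :
    IsGreatest
      ((fun ρ : Y → ℝ => (∑ y, ρ y * r y) - β * KL ρ πb) ''
        {ρ : Y → ℝ | (∀ y, 0 ≤ ρ y) ∧ ∑ y, ρ y = 1})
      (β * Real.log (∑ y, πb y * Real.exp (r y / β))) := by
  set Z : ℝ := ∑ y, πb y * Real.exp (r y / β) with hZdef
  have hZpos : 0 < Z :=
    Finset.sum_pos (fun y _ => mul_pos (hπb_pos y) (Real.exp_pos _)) Finset.univ_nonempty
  set πs : Y → ℝ := fun y => πb y * Real.exp (r y / β) / Z with hπsdef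
  have hπs_pos : ∀ y, 0 < πs y := fun y =>
    div_pos (mul_pos (hπb_pos y) (Real.exp_pos _)) hZpos
  have hπs_sum : ∑ y, πs y = 1 := by
    simp only [hπsdef]
    rw [← Finset.sum_div, ← hZdef, div_self hZpos.ne']
  have key : ∀ ρ : Y → ℝ, (∀ y, 0 ≤ ρ y) → (∑ y, ρ y = 1) →
      (∑ y, ρ y * r y) - β * KL ρ πb
        = β * Real.log Z - β * ∑ y, ρ y * Real.log (ρ y / πs y) := by
    intro ρ hρ hρs
    have hpt : ∀ y, ρ y * Real.log (ρ y / πs y)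
        = ρ y * Real.log (ρ y / πb y) - ρ y * (r y / β) + ρ y * Real.log Z := by
      intro y
      rcases eq_or_lt_of_le (hρ y) with h0 | h0
      · simp [← h0]
      · have hne : Real.exp (r y / β) ≠ 0 := (Real.exp_pos _).ne'
        have harg : ρ y / πs y = (ρ y / πb y) * (Real.exp (r y / β))⁻¹ * Z := by
          simp only [hπsdef]
          field_simp
        have hlog : Real.log (ρ y / πs y)
            = Real.log (ρ y / πb y) - r y / β + Real.log Z := by
          rw [harg, Real.log_mul (mul_ne_zero (div_pos h0 (hπb_pos y)).ne'
              (inv_ne_zero hne)) hZpos.ne',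
            Real.log_mul (div_pos h0 (hπb_pos y)).ne' (inv_ne_zero hne),
            Real.log_inv, Real.log_exp]
          ring
        rw [hlog]; ring
    have hsum : ∑ y, ρ y * Real.log (ρ y / πs y)
        = KL ρ πb - (∑ y, ρ y * r y) / β + Real.log Z := by
      rw [Finset.sum_congr rfl (fun y _ => hpt y), Finset.sum_add_distrib,
        Finset.sum_sub_distrib, ← Finset.sum_mul, hρs, one_mul]
      congr 1
      congr 1
      rw [Finset.sum_div]
      exact Finset.sum_congr rfl (fun y _ => by rw [mul_div_assoc])
    rw [hsum]
    field_simp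
    ring
  constructor
  · refine ⟨πs, ⟨fun y => (hπs_pos y).le, hπs_sum⟩, ?_⟩
    show (∑ y, πs y * r y) - β * KL πs πb = β * Real.log Z
    rw [key πs (fun y => (hπs_pos y).le) hπs_sum]
    have : ∀ y, πs y / πs y = 1 := fun y => div_self (hπs_pos y).ne'
    simp [this]
  · rintro x ⟨ρ, ⟨hρ0, hρ1⟩, rfl⟩
    simp only
    rw [key ρ hρ0 hρ1]
    have h := sum_log_div_nonneg ρ πs hρ0 hρ1 hπs_pos hπs_sum
    nlinarith
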